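/- Let A be a unital algebra over a commutative ℚ-algebra k with k → A split. Define the map i : Ω̄ⁿA → Ω̄^{n−1}A by i(a₀ da₁⋯da_n) = Σ_{ℓ=1}^n (−1)^{(ℓ−1)(n−1)+1} [a_ℓ, da_{ℓ+1}⋯da_n a₀ da₁⋯da_{ℓ−1}]. Then i vanishes on the subspace of graded commutators [ΩA, ΩA], and hence descends to a map DR^•A → Ω^{•−1}A on the noncommutative de Rham complex DR A = ΩA/[ΩA,ΩA]. -/

import Mathlib

namespace Stmt10Aux

variable {k A Ω : Type} [CommRing k] [Ring A] [Algebra k A] [Ring Ω] [Algebra k Ω]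

def Dl (d : Ω →ₗ[k] Ω) (ι : A →ₐ[k] Ω) (L : List A) : Ω := (L.map fun x => d (ι x)).prod

def Ssum (d : Ω →ₗ[k] Ω) (ι : A →ₐ[k] Ω) (e : ℕ) : Ω → List A → Ω
  | _, [] => 0
  | ω, x :: μ => (-1 : ℤ) • (ι x * (Dl d ι μ * ω) - (Dl d ι μ * ω) * ι x)
      + ((-1 : ℤ)^e) • Ssum d ι e (ω * d (ι x)) μ

def expL (b : A) : List A → List (ℤ × List A)
  | [] => []
  | [x] => [(1, [x * b])]
  | x :: y :: ρ => ((-1 : ℤ)^(ρ.length + 1), (x * y) :: (ρ ++ [b])) ::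
      (expL b (y :: ρ)).map (fun p => (p.1, x :: p.2))

variable (d : Ω →ₗ[k] Ω) (ι : A →ₐ[k] Ω)

@[simp] lemma Dl_nil : Dl d ι [] = 1 := rfl

@[simp] lemma Dl_cons (x : A) (L : List A) : Dl d ι (x :: L) = d (ι x) * Dl d ι L := by
  simp [Dl]

lemma Dl_append (L M : List A) : Dl d ι (L ++ M) = Dl d ι L * Dl d ι M := by
  simp [Dl]

@[simp] lemma Dl_singleton (x : A) : Dl d ι [x] = d (ι x) := by simp [Dl]

@[simp] lemma Ssum_nil (e : ℕ) (ω : Ω) : Ssum d ι e ω [] = 0 := rfl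

lemma Ssum_cons (e : ℕ) (ω : Ω) (x : A) (μ : List A) :
    Ssum d ι e ω (x :: μ) = (-1 : ℤ) • (ι x * (Dl d ι μ * ω) - (Dl d ι μ * ω) * ι x)
      + ((-1 : ℤ)^e) • Ssum d ι e (ω * d (ι x)) μ := rfl

lemma Ssum_add (e : ℕ) (ω₁ ω₂ : Ω) (μ : List A) :
    Ssum d ι e (ω₁ + ω₂) μ = Ssum d ι e ω₁ μ + Ssum d ι e ω₂ μ := by
  induction μ generalizing ω₁ ω₂ with
  | nil => simp
  | cons x μ ih =>
      rw [Ssum_cons, Ssum_cons, Ssum_cons, add_mul, ih]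
      simp only [mul_add, add_mul, smul_add, smul_sub]
      abel

lemma Ssum_append (e : ℕ) (b : A) (ω : Ω) (μ : List A) :
    Ssum d ι e ω (μ ++ [b]) = Ssum d ι e (d (ι b) * ω) μ
      + ((-1 : ℤ)^(μ.length * e + 1)) • (ι b * (ω * Dl d ι μ) - (ω * Dl d ι μ) * ι b) := by
  induction μ generalizing ω with
  | nil => simp [Ssum_cons]
  | cons x μ ih =>
      rw [List.cons_append, Ssum_cons, ih, Ssum_cons]
      rw [Dl_append, Dl_singleton, Dl_cons, List.length_cons]
      rw [smul_add, smul_smul, ← pow_add]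
      have he : (e + (μ.length * e + 1) : ℕ) = (μ.length + 1) * e + 1 := by ring
      rw [he]
      simp only [mul_assoc]
      abel


lemma mul_listsum {α : Type} (u : Ω) (l : List α) (f : α → Ω) :
    u * (l.map f).sum = (l.map fun a => u * f a).sum := by
  induction l with
  | nil => simp
  | cons x l ih => simp [mul_add, ih]

lemma sum_map_mulsub {α : Type} (l : List α) (f : α → Ω) (u w : Ω) :
    (l.map fun p => u * (f p * w) - (f p * w) * u).sum
      = u * ((l.map f).sum * w) - ((l.map f).sum * w) * u := by
  induction l with
  | nil => simp
  | cons x l ih =>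
      simp only [List.map_cons, List.sum_cons, ih, add_mul, mul_add]
      abel

lemma expL_length (b : A) : ∀ (ν : List A), ∀ p ∈ expL b ν, p.2.length = ν.length := by
  intro ν
  induction ν with
  | nil => simp [expL]
  | cons x ν ih =>
      cases ν with
      | nil => simp [expL]
      | cons y ρ =>
          intro p hp
          rw [expL] at hp
          rcases List.mem_cons.1 hp with h | h
          · subst h; simp
          · rcases List.mem_map.1 h with ⟨q, hq, rfl⟩
            have := ih q hq
            simp at this ⊢
            omega

lemma expand (hdmul : ∀ x y : A, d (ι x * ι y) = d (ι x) * ι y + ι x * d (ι y))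
    (b : A) : ∀ (ν : List A) (x : A),
    Dl d ι (x :: ν) * ι b = ((expL b (x :: ν)).map (fun p => p.1 • Dl d ι p.2)).sum
      + ((-1 : ℤ)^(x :: ν).length) • (ι x * Dl d ι (ν ++ [b])) := by
  intro ν
  induction ν with
  | nil =>
      intro x
      simp only [expL, List.map_cons, List.map_nil, List.sum_cons, List.sum_nil, Dl_cons,
        Dl_nil, Dl_singleton, List.length_cons, List.length_nil, List.nil_append, one_smul,
        add_zero, mul_one, pow_one]
      have h1 : d (ι (x * b)) = d (ι x) * ι b + ι x * d (ι b) := by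
        rw [map_mul]; exact hdmul x b
      rw [h1]
      abel
  | cons y ρ ih =>
      intro x
      have hL : Dl d ι (x :: y :: ρ) * ι b = d (ι x) * (Dl d ι (y :: ρ) * ι b) := by
        rw [Dl_cons, mul_assoc]
      rw [hL, ih y, mul_add, mul_listsum]
      have hxy : d (ι x) * ι y = d (ι (x * y)) - ι x * d (ι y) := by
        rw [map_mul, hdmul x y]; abel
      have h2 : d (ι x) * ((-1 : ℤ)^((y :: ρ).length) • (ι y * Dl d ι (ρ ++ [b])))
          = ((-1 : ℤ)^(ρ.length + 1)) • (d (ι (x*y)) * Dl d ι (ρ ++ [b]))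
            + ((-1 : ℤ)^(ρ.length + 2)) • (ι x * (d (ι y) * Dl d ι (ρ ++ [b]))) := by
        have hp2 : ((-1 : ℤ))^(ρ.length + 2) = (-1 : ℤ)^ρ.length := by
          rw [pow_add]; ring
        have hp1 : ((-1 : ℤ))^(ρ.length + 1) = -(-1 : ℤ)^ρ.length := by
          rw [pow_add]; ring
        rw [hp2, hp1, mul_smul_comm, ← mul_assoc, hxy, sub_mul, List.length_cons, hp1]
        simp only [mul_assoc, neg_smul, smul_sub]
        abel
      rw [h2]
      rw [show expL b (x :: y :: ρ)
        = ((-1 : ℤ)^(ρ.length + 1), (x * y) :: (ρ ++ [b])) ::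
          (expL b (y :: ρ)).map (fun p => (p.1, x :: p.2)) from rfl]
      simp only [List.map_cons, List.sum_cons, List.map_map]
      have h3 : ((expL b (y :: ρ)).map ((fun p : ℤ × List A => p.1 • Dl d ι p.2) ∘
            (fun p : ℤ × List A => (p.1, x :: p.2)))).sum
          = ((expL b (y :: ρ)).map (fun p => d (ι x) * (p.1 • Dl d ι p.2))).sum := by
        apply congrArg
        apply List.map_congr_left
        intro p _
        simp only [Function.comp_apply, Dl_cons, mul_smul_comm]
      rw [h3]
      simp only [Dl_cons, List.length_cons, List.nil_append]
      have hlen : (ρ.length + 1 + 1 : ℕ) = ρ.length + 2 := rfl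
      rw [hlen]
      abel


lemma listsum_smul {α : Type} (c : ℤ) (l : List α) (f : α → Ω) :
    (l.map fun a => c • f a).sum = c • (l.map f).sum := by
  induction l with
  | nil => simp
  | cons x l ih =>
      rw [List.map_cons, List.sum_cons, List.map_cons, List.sum_cons, ih, smul_add]

lemma gen (hdmul : ∀ x y : A, d (ι x * ι y) = d (ι x) * ι y + ι x * d (ι y))
    (e : ℕ) (b : A) : ∀ (ν : List A) (x : A) (ω : Ω),
    ((expL b (x :: ν)).map (fun p => p.1 • Ssum d ι e ω p.2)).sum
      + ((-1 : ℤ)^(x :: ν).length) • Ssum d ι e (ω * ι x) (ν ++ [b])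
    = Ssum d ι e (ι b * ω) (x :: ν) := by
  intro ν
  induction ν with
  | nil =>
      intro x ω
      simp only [expL, List.map_cons, List.map_nil, List.sum_cons, List.sum_nil, add_zero,
        List.length_cons, List.length_nil, List.nil_append, one_smul, pow_one, pow_zero]
      rw [Ssum_cons, Ssum_cons, Ssum_cons]
      simp only [Ssum_nil, Dl_nil, one_mul, smul_zero, add_zero, map_mul, mul_assoc]
      module
  | cons y ρ ih =>
      intro x ω
      have hexp : expL b (x :: y :: ρ)
          = ((-1 : ℤ)^(ρ.length + 1), (x * y) :: (ρ ++ [b])) ::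
            (expL b (y :: ρ)).map (fun p => (p.1, x :: p.2)) := rfl
      rw [hexp]
      simp only [List.map_cons, List.sum_cons, List.map_map]
      set l := expL b (y :: ρ) with hl
      set M := Dl d ι (ρ ++ [b]) with hM
      set V := (l.map (fun p => p.1 • Dl d ι p.2)).sum with hV
      -- head term
      have h1 : Ssum d ι e ω ((x*y) :: (ρ ++ [b]))
          = (-1 : ℤ) • (ι (x*y) * (M * ω) - (M * ω) * ι (x*y))
            + ((-1 : ℤ)^e) • (Ssum d ι e ((ω * d (ι x)) * ι y) (ρ ++ [b])
              + Ssum d ι e ((ω * ι x) * d (ι y)) (ρ ++ [b])) := by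
        rw [Ssum_cons]
        congr 1
        have hω : ω * d (ι (x*y)) = (ω * d (ι x)) * ι y + (ω * ι x) * d (ι y) := by
          rw [map_mul, hdmul, mul_add, mul_assoc, mul_assoc]
        rw [hω, Ssum_add]
      -- mapped-tail sum
      have h2 : (l.map ((fun p : ℤ × List A => p.1 • Ssum d ι e ω p.2) ∘
            (fun p : ℤ × List A => (p.1, x :: p.2)))).sum
          = (-1 : ℤ) • (ι x * (V * ω) - (V * ω) * ι x)
            + ((-1 : ℤ)^e) • (l.map (fun p => p.1 • Ssum d ι e (ω * d (ι x)) p.2)).sum := by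
        have hterm : ∀ p ∈ l, ((fun p : ℤ × List A => p.1 • Ssum d ι e ω p.2) ∘
              (fun p : ℤ × List A => (p.1, x :: p.2))) p
            = (-1 : ℤ) • (ι x * ((p.1 • Dl d ι p.2) * ω) - ((p.1 • Dl d ι p.2) * ω) * ι x)
              + ((-1 : ℤ)^e) • (p.1 • Ssum d ι e (ω * d (ι x)) p.2) := by
          intro p _
          simp only [Function.comp_apply, Ssum_cons, smul_add, smul_smul, smul_sub,
            smul_mul_assoc, mul_smul_comm]
          ring_nf
        rw [List.map_congr_left hterm, List.sum_map_add]
        rw [listsum_smul, listsum_smul, sum_map_mulsub]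
      -- last term
      have h3 : Ssum d ι e (ω * ι x) ((y :: ρ) ++ [b])
          = (-1 : ℤ) • (ι y * (M * (ω * ι x)) - (M * (ω * ι x)) * ι y)
            + ((-1 : ℤ)^e) • Ssum d ι e ((ω * ι x) * d (ι y)) (ρ ++ [b]) := by
        rw [List.cons_append, Ssum_cons]
      -- induction hypothesis
      have hIH : (l.map (fun p => p.1 • Ssum d ι e (ω * d (ι x)) p.2)).sum
          = Ssum d ι e (ι b * (ω * d (ι x))) (y :: ρ)
            - ((-1 : ℤ)^(ρ.length + 1)) • Ssum d ι e ((ω * d (ι x)) * ι y) (ρ ++ [b]) := by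
        have h := ih y (ω * d (ι x))
        rw [List.length_cons] at h
        exact eq_sub_of_add_eq h
      have hE : V = Dl d ι (y :: ρ) * ι b - ((-1 : ℤ)^(ρ.length + 1)) • (ι y * M) := by
        have h := expand d ι hdmul b ρ y
        rw [List.length_cons] at h
        exact eq_sub_of_add_eq (by rw [← h])
      rw [h1, h2, h3, hIH, hE]
      conv_rhs => rw [Ssum_cons]
      simp only [List.length_cons, map_mul, sub_mul, mul_sub, mul_assoc, smul_sub, smul_add,
        smul_smul, mul_smul_comm, smul_mul_assoc]
      module

lemma Ssum_closed (e : ℕ) : ∀ (μ : List A) (ω : Ω),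
    Ssum d ι e ω μ = ∑ j ∈ Finset.range μ.length, ((-1 : ℤ)^(j*e+1)) •
      (ι (μ.getD j 1) * (Dl d ι (μ.drop (j+1)) * (ω * Dl d ι (μ.take j)))
       - (Dl d ι (μ.drop (j+1)) * (ω * Dl d ι (μ.take j))) * ι (μ.getD j 1)) := by
  intro μ
  induction μ with
  | nil => intro ω; simp
  | cons x μ ih =>
      intro ω
      rw [Ssum_cons, ih (ω * d (ι x)), Finset.smul_sum, List.length_cons,
        Finset.sum_range_succ']
      conv_lhs => rw [add_comm]
      congr 1
      · apply Finset.sum_congr rfl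
        intro j _
        rw [smul_smul, ← pow_add]
        have hee : (e + (j * e + 1) : ℕ) = (j+1)*e+1 := by ring
        rw [hee]
        simp only [List.getD_cons_succ, List.drop_succ_cons, List.take_succ_cons, Dl_cons,
          mul_assoc]
      · simp [pow_one]


lemma R1std (iOp : Ω →ₗ[k] Ω)
    (hstar : ∀ (L : List A) (a0 : A),
      iOp (ι a0 * Dl d ι L) = Ssum d ι (L.length - 1) (ι a0) L)
    (hdmul : ∀ x y : A, d (ι x * ι y) = d (ι x) * ι y + ι x * d (ι y))
    (b a0 : A) (L : List A) :
    iOp (d (ι b) * (ι a0 * Dl d ι L))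
      = ((-1 : ℤ)^L.length) • iOp ((ι a0 * Dl d ι L) * d (ι b)) := by
  set n := L.length with hn
  have e1 : d (ι b) * (ι a0 * Dl d ι L)
      = ι (1:A) * Dl d ι ((b*a0) :: L) - ι b * Dl d ι (a0 :: L) := by
    rw [Dl_cons, Dl_cons, map_one, one_mul, ← mul_assoc, ← mul_assoc]
    rw [show d (ι b) * ι a0 = d (ι (b*a0)) - ι b * d (ι a0) from by
      rw [map_mul, hdmul b a0]; abel]
    rw [sub_mul]
  have e2 : (ι a0 * Dl d ι L) * d (ι b) = ι a0 * Dl d ι (L ++ [b]) := by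
    rw [Dl_append, Dl_singleton, mul_assoc]
  rw [e1, map_sub, e2, hstar, hstar, hstar]
  have hl1 : ((b*a0) :: L).length - 1 = n := by simp [hn]
  have hl2 : ((a0) :: L).length - 1 = n := by simp [hn]
  have hl3 : (L ++ [b]).length - 1 = n := by simp [hn]
  rw [hl1, hl2, hl3, Ssum_cons, Ssum_cons, Ssum_append]
  rw [show ι (1:A) * d (ι (b*a0)) = d (ι b) * ι a0 + ι b * d (ι a0) from by
    rw [map_one, one_mul, map_mul, hdmul]]
  rw [Ssum_add]
  have hsign : ∀ v : Ω, ((-1 : ℤ)^n) • (((-1 : ℤ)^(n * n + 1)) • v) = -v := by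
    intro v
    rw [smul_smul, ← pow_add]
    have h1 : (n + (n * n + 1) : ℕ) = n * (n + 1) + 1 := by ring
    rw [h1, pow_succ, Even.neg_one_pow (Nat.even_mul_succ_self n)]
    simp
  rw [← hn]
  conv_rhs => rw [smul_add, hsign]
  simp only [map_one, map_mul, mul_one, one_mul, mul_assoc, smul_sub, smul_add, smul_smul,
    mul_smul_comm, smul_mul_assoc, sub_mul, mul_sub]
  module

lemma R0std (iOp : Ω →ₗ[k] Ω)
    (hstar : ∀ (L : List A) (a0 : A),
      iOp (ι a0 * Dl d ι L) = Ssum d ι (L.length - 1) (ι a0) L)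
    (hdmul : ∀ x y : A, d (ι x * ι y) = d (ι x) * ι y + ι x * d (ι y))
    (hi0 : ∀ a : A, iOp (ι a) = 0)
    (b a0 : A) (L : List A) :
    iOp (ι b * (ι a0 * Dl d ι L)) = iOp ((ι a0 * Dl d ι L) * ι b) := by
  cases L with
  | nil =>
      rw [Dl_nil, mul_one, ← map_mul, ← map_mul, hi0, hi0]
  | cons x ν =>
      have hL : ι b * (ι a0 * Dl d ι (x :: ν)) = ι (b*a0) * Dl d ι (x :: ν) := by
        rw [map_mul, mul_assoc]
      rw [hL, hstar]
      have hR : (ι a0 * Dl d ι (x :: ν)) * ι b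
          = ((expL b (x :: ν)).map (fun p => p.1 • (ι a0 * Dl d ι p.2))).sum
            + ((-1 : ℤ)^(x :: ν).length) • (ι (a0 * x) * Dl d ι (ν ++ [b])) := by
        rw [mul_assoc, expand d ι hdmul b ν x, mul_add, mul_listsum, map_mul, mul_assoc]
        congr 1
        · apply congrArg
          apply List.map_congr_left
          intro p _
          rw [mul_smul_comm]
        · rw [mul_smul_comm]
      rw [hR, map_add, map_zsmul, map_list_sum]
      have hterm : ((expL b (x :: ν)).map (fun p => p.1 • (ι a0 * Dl d ι p.2))).map iOp
          = (expL b (x :: ν)).map (fun p => p.1 • Ssum d ι ν.length (ι a0) p.2) := by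
        rw [List.map_map]
        apply List.map_congr_left
        intro p hp
        have hlp : p.2.length = (x :: ν).length := expL_length b (x :: ν) p hp
        rw [Function.comp_apply, map_zsmul, hstar, hlp, List.length_cons,
          Nat.add_sub_cancel]
      rw [hterm]
      have hlast : iOp (ι (a0 * x) * Dl d ι (ν ++ [b]))
          = Ssum d ι ν.length (ι (a0 * x)) (ν ++ [b]) := by
        rw [hstar]
        congr 1
        simp
      rw [hlast]
      rw [show (ι (a0 * x) : Ω) = ι a0 * ι x from map_mul ι a0 x,
          show (ι (b * a0) : Ω) = ι b * ι a0 from map_mul ι b a0,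
          show ((x :: ν).length - 1 : ℕ) = ν.length from by simp]
      exact (gen d ι hdmul ν.length b ν x (ι a0)).symm

end Stmt10Aux

open Stmt10Aux


/-- the contraction map
`i(a₀ da₁⋯da_n) = Σ_{ℓ=1}^n (−1)^{(ℓ−1)(n−1)+1} [a_ℓ, da_{ℓ+1}⋯da_n a₀ da₁⋯da_{ℓ−1}]`
on the differential envelope `Ω A` vanishes on the span of graded commutators
`[Ω A, Ω A]`, hence descends to the noncommutative de Rham complex
`DR A = Ω A/[Ω A, Ω A]`. -/
theorem stmt_10 {k A Ω : Type} [CommRing k] [Algebra ℚ k]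
    [Ring A] [Algebra k A] [Ring Ω] [Algebra k Ω]
    (ι : A →ₐ[k] Ω) (d : Ω →ₗ[k] Ω) (G : ℕ → Submodule k Ω)
    (hsplit : ∃ p : A →ₗ[k] k, ∀ c : k, p (algebraMap k A c) = c)
    (hG0 : G 0 = LinearMap.range ι.toLinearMap)
    (hGmul : ∀ m n : ℕ, ∀ x ∈ G m, ∀ y ∈ G n, x * y ∈ G (m + n))
    (hdG : ∀ n : ℕ, ∀ x ∈ G n, d x ∈ G (n + 1))
    (hdd : ∀ x : Ω, d (d x) = 0)
    (hleib : ∀ (m : ℕ) (x : Ω), x ∈ G m → ∀ y : Ω,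
      d (x * y) = d x * y + ((-1 : ℤ) ^ m) • (x * d y))
    (hspan : ∀ n : ℕ, G n = Submodule.span k
      {w : Ω | ∃ a : ℕ → A,
        w = ι (a 0) * (List.ofFn fun i : Fin n => d (ι (a (i.1 + 1)))).prod})
    (hsup : (⨆ n, G n) = ⊤)
    -- the map i, prescribed on standard forms by the explicit contraction formula
    (iOp : Ω →ₗ[k] Ω)
    (hi0 : ∀ a : A, iOp (ι a) = 0)
    (hi : ∀ (n : ℕ) (a : ℕ → A),
      iOp (ι (a 0) * (List.ofFn fun i : Fin n => d (ι (a (i.1 + 1)))).prod)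
        = ∑ l ∈ Finset.Icc 1 n, ((-1 : ℤ) ^ ((l - 1) * (n - 1) + 1)) •
            (ι (a l) *
               ((List.ofFn fun i : Fin (n - l) => d (ι (a (l + 1 + i.1)))).prod *
                 ι (a 0) *
                 (List.ofFn fun i : Fin (l - 1) => d (ι (a (1 + i.1)))).prod)
             - ((List.ofFn fun i : Fin (n - l) => d (ι (a (l + 1 + i.1)))).prod *
                 ι (a 0) *
                 (List.ofFn fun i : Fin (l - 1) => d (ι (a (1 + i.1)))).prod) *
               ι (a l))) :
    -- i vanishes on the span of graded commutators
    ∀ x ∈ Submodule.span k {c : Ω | ∃ (m n : ℕ) (y z : Ω),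
        y ∈ G m ∧ z ∈ G n ∧ c = y * z - ((-1 : ℤ) ^ (m * n)) • (z * y)},
      iOp x = 0 := by
    -- Leibniz rule on generators
  have hdmul : ∀ x y : A, d (ι x * ι y) = d (ι x) * ι y + ι x * d (ι y) := by
    intro x y
    have hx : (ι x : Ω) ∈ G 0 := by rw [hG0]; exact ⟨x, rfl⟩
    simpa using hleib 0 (ι x) hx (ι y)
  -- the contraction formula in list form
  have hstar : ∀ (L : List A) (a0 : A),
      iOp (ι a0 * Dl d ι L) = Ssum d ι (L.length - 1) (ι a0) L := by
    intro L a0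
    cases L with
    | nil => simp [Dl_nil, hi0]
    | cons x L' =>
        set n := (x :: L').length with hn
        set a : ℕ → A := fun j => if j = 0 then a0 else (x :: L').getD (j-1) 1 with ha
        have h0 : a 0 = a0 := by simp [ha]
        have haux : ∀ t : ℕ, t ≠ 0 → a t = (x :: L').getD (t-1) 1 := by
          intro t ht; simp [ha, ht]
        have hofn : (List.ofFn fun i : Fin n => d (ι (a (i.1 + 1))))
            = (x :: L').map (fun t => d (ι t)) := by
          apply List.ext_getElem
          · simp [hn]
          · intro i h1 h2
            simp only [List.getElem_ofFn, List.getElem_map]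
            rw [haux (i+1) (by omega), show (i + 1 - 1 : ℕ) = i from by omega,
              List.getD_eq_getElem _ _ (by simpa using h2)]
        have hiL := hi n a
        rw [h0, hofn] at hiL
        rw [show ((x :: L').map (fun t => d (ι t))).prod = Dl d ι (x :: L') from rfl] at hiL
        rw [hiL, Ssum_closed]
        rw [← Finset.Ico_add_one_right_eq_Icc, Finset.sum_Ico_eq_sum_range]
        rw [show (n + 1 - 1 : ℕ) = n from rfl]
        rw [show (x :: L').length = n from rfl]
        apply Finset.sum_congr rfl
        intro j hj
        rw [Finset.mem_range] at hj
        have e0 : a (1 + j) = (x :: L').getD j 1 := by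
          rw [haux (1 + j) (by omega), show (1 + j - 1 : ℕ) = j from by omega]
        have edrop : (List.ofFn fun i : Fin (n - (1 + j)) => d (ι (a (1 + j + 1 + i.1))))
            = ((x :: L').drop (j+1)).map (fun t => d (ι t)) := by
          apply List.ext_getElem
          · simp only [List.length_ofFn, List.length_map, List.length_drop]
            omega
          · intro i h1 h2
            simp only [List.getElem_ofFn, List.getElem_map, List.getElem_drop]
            rw [haux (1 + j + 1 + i) (by omega),
              show (1 + j + 1 + i - 1 : ℕ) = j + 1 + i from by omega,
              List.getD_eq_getElem _ _ (by
                simp only [List.length_ofFn] at h1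
                simp only [List.length_cons]
                simp only [hn, List.length_cons] at h1
                omega)]
        have etake : (List.ofFn fun i : Fin (1 + j - 1) => d (ι (a (1 + i.1))))
            = ((x :: L').take j).map (fun t => d (ι t)) := by
          apply List.ext_getElem
          · simp only [List.length_ofFn, List.length_map, List.length_take, List.length_cons]
            simp only [hn, List.length_cons] at hj
            omega
          · intro i h1 h2
            simp only [List.getElem_ofFn, List.getElem_map, List.getElem_take]
            rw [haux (1 + i) (by omega), show (1 + i - 1 : ℕ) = i from by omega,
              List.getD_eq_getElem _ _ (by
                simp only [List.length_ofFn] at h1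
                simp only [List.length_cons]
                simp only [hn, List.length_cons] at hj
                omega)]
        rw [e0, edrop, etake]
        rw [show (((x :: L').drop (j+1)).map (fun t => d (ι t))).prod
            = Dl d ι ((x :: L').drop (j+1)) from rfl,
          show (((x :: L').take j).map (fun t => d (ι t))).prod
            = Dl d ι ((x :: L').take j) from rfl]
        rw [show ((1 + j - 1) * (n - 1) + 1 : ℕ) = j * ((x :: L').length - 1) + 1 from by
          rw [show (1 + j - 1 : ℕ) = j from by omega]]
        congr 1
        rw [mul_assoc, mul_assoc]
  -- membership facts
  have hmem0 : ∀ c : A, (ι c : Ω) ∈ G 0 := by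
    intro c; rw [hG0]; exact ⟨c, rfl⟩
  have hdx1 : ∀ x : A, (d (ι x) : Ω) ∈ G 1 := fun x => hdG 0 (ι x) (hmem0 x)
  have hDlG : ∀ L : List A, Dl d ι L ∈ G L.length := by
    intro L
    induction L with
    | nil => simpa using hmem0 1
    | cons x L ih =>
        have := hGmul 1 L.length _ (hdx1 x) _ ih
        rw [show (1 + L.length : ℕ) = (x :: L).length from by simp [Nat.add_comm]] at this
        simpa using this
  have hofnDl : ∀ (m : ℕ) (a : ℕ → A),
      (List.ofFn fun i : Fin m => d (ι (a (i.1 + 1)))).prod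
        = Dl d ι (List.ofFn fun i : Fin m => a (i.1 + 1)) := by
    intro m a
    rw [Dl, List.map_ofFn]
    rfl
  -- rotating a degree-one generator
  have hR1 : ∀ (n : ℕ) (b : A) (u : Ω), u ∈ G n →
      iOp (d (ι b) * u) = ((-1 : ℤ)^n) • iOp (u * d (ι b)) := by
    intro n b u hu
    rw [hspan n] at hu
    refine Submodule.span_induction
      (p := fun u _ => iOp (d (ι b) * u) = ((-1 : ℤ)^n) • iOp (u * d (ι b))) ?_ ?_ ?_ ?_ hu
    · rintro w ⟨a, rfl⟩
      rw [hofnDl n a]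
      have := R1std d ι iOp hstar hdmul b (a 0) (List.ofFn fun i : Fin n => a (i.1 + 1))
      simpa [List.length_ofFn] using this
    · simp
    · intro u v _ _ h1 h2
      rw [mul_add, map_add, h1, h2, add_mul, map_add, smul_add]
    · intro t u _ h
      rw [mul_smul_comm, map_smul, h, smul_mul_assoc, map_smul, smul_comm]
  -- rotating a degree-zero generator
  have hR0 : ∀ (n : ℕ) (b : A) (u : Ω), u ∈ G n →
      iOp (ι b * u) = iOp (u * ι b) := by
    intro n b u hu
    rw [hspan n] at hu
    refine Submodule.span_induction
      (p := fun u _ => iOp (ι b * u) = iOp (u * ι b)) ?_ ?_ ?_ ?_ hu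
    · rintro w ⟨a, rfl⟩
      rw [hofnDl n a]
      exact R0std d ι iOp hstar hdmul hi0 b (a 0) _
    · simp
    · intro u v _ _ h1 h2
      rw [mul_add, map_add, h1, h2, add_mul, map_add]
    · intro t u _ h
      rw [mul_smul_comm, map_smul, h, smul_mul_assoc, map_smul]
  -- rotating a whole standard form
  have hCL : ∀ (B : List A) (c : A) (n' : ℕ) (z : Ω), z ∈ G n' →
      iOp ((ι c * Dl d ι B) * z)
        = ((-1 : ℤ)^(B.length * n')) • iOp (z * (ι c * Dl d ι B)) := by
    intro B
    induction B with
    | nil =>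
        intro c n' z hz
        simpa [Dl_nil] using hR0 n' c z hz
    | cons x B' ih =>
        intro c n' z hz
        have hzc : z * ι c ∈ G (n' + 0) := hGmul n' 0 z hz _ (hmem0 c)
        have hu1 : d (ι x) * (Dl d ι B' * z) ∈ G (1 + (B'.length + n')) :=
          hGmul 1 _ _ (hdx1 x) _ (hGmul _ _ _ (hDlG B') _ hz)
        have hu2 : Dl d ι B' * (z * ι c) ∈ G (B'.length + (n' + 0)) :=
          hGmul _ _ _ (hDlG B') _ hzc
        have hz'' : (z * ι c) * d (ι x) ∈ G ((n' + 0) + 1) :=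
          hGmul _ 1 _ hzc _ (hdx1 x)
        have s1 : (ι c * Dl d ι (x :: B')) * z = ι c * (d (ι x) * (Dl d ι B' * z)) := by
          rw [Dl_cons, mul_assoc, mul_assoc]
        have s2 : (d (ι x) * (Dl d ι B' * z)) * ι c = d (ι x) * (Dl d ι B' * (z * ι c)) := by
          rw [mul_assoc, mul_assoc]
        have s4 : (Dl d ι B' * (z * ι c)) * d (ι x)
            = (ι (1:A) * Dl d ι B') * ((z * ι c) * d (ι x)) := by
          rw [map_one, one_mul, mul_assoc, mul_assoc]
        have s6 : ((z * ι c) * d (ι x)) * (ι (1:A) * Dl d ι B')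
            = z * (ι c * Dl d ι (x :: B')) := by
          rw [map_one, one_mul, Dl_cons, mul_assoc, mul_assoc]
        calc iOp ((ι c * Dl d ι (x :: B')) * z)
            = iOp (ι c * (d (ι x) * (Dl d ι B' * z))) := by rw [s1]
          _ = iOp ((d (ι x) * (Dl d ι B' * z)) * ι c) := hR0 _ c _ hu1
          _ = iOp (d (ι x) * (Dl d ι B' * (z * ι c))) := by rw [s2]
          _ = ((-1 : ℤ)^(B'.length + (n' + 0))) • iOp ((Dl d ι B' * (z * ι c)) * d (ι x)) :=
              hR1 _ x _ hu2
          _ = ((-1 : ℤ)^(B'.length + (n' + 0))) •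
                iOp ((ι (1:A) * Dl d ι B') * ((z * ι c) * d (ι x))) := by rw [s4]
          _ = ((-1 : ℤ)^(B'.length + (n' + 0))) • (((-1 : ℤ)^(B'.length * ((n' + 0) + 1))) •
                iOp (((z * ι c) * d (ι x)) * (ι (1:A) * Dl d ι B'))) := by
              rw [ih 1 ((n' + 0) + 1) _ hz'']
          _ = ((-1 : ℤ)^((x :: B').length * n')) • iOp (z * (ι c * Dl d ι (x :: B'))) := by
              have hsg : ((-1 : ℤ))^(B'.length + (n' + 0) + B'.length * ((n' + 0) + 1))
                  = (-1 : ℤ)^((x :: B').length * n') := by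
                rw [show (B'.length + (n' + 0) + B'.length * ((n' + 0) + 1) : ℕ)
                    = 2 * B'.length + (B'.length + 1) * n' from by ring,
                  List.length_cons, pow_add, pow_mul]
                norm_num
              rw [s6, smul_smul, ← pow_add, hsg]
  -- the main symmetry
  have hMAIN : ∀ (m n : ℕ) (y z : Ω), y ∈ G m → z ∈ G n →
      iOp (y * z) = ((-1 : ℤ)^(m * n)) • iOp (z * y) := by
    intro m n y z hy hz
    rw [hspan m] at hy
    refine Submodule.span_induction
      (p := fun y _ => iOp (y * z) = ((-1 : ℤ)^(m * n)) • iOp (z * y)) ?_ ?_ ?_ ?_ hy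
    · rintro w ⟨a, rfl⟩
      rw [hofnDl m a]
      have := hCL (List.ofFn fun i : Fin m => a (i.1 + 1)) (a 0) n z hz
      simpa [List.length_ofFn] using this
    · simp
    · intro u v _ _ h1 h2
      rw [add_mul, map_add, h1, h2, mul_add, map_add, smul_add]
    · intro t u _ h
      rw [smul_mul_assoc, map_smul, h, mul_smul_comm, map_smul, smul_comm]
  -- conclusion
  intro w hw
  refine Submodule.span_induction (p := fun w _ => iOp w = 0) ?_ (map_zero iOp) ?_ ?_ hw
  · rintro c ⟨m, n, y, z, hy, hz, rfl⟩
    rw [map_sub, map_zsmul, hMAIN m n y z hy hz, sub_self]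
  · intro u v _ _ h1 h2
    rw [map_add, h1, h2, add_zero]
  · intro t u _ h
    rw [map_smul, h, smul_zero]
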